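/- There exist constants d_i > 0, G_j, F_j ≥ 0, a*_{ij}, b*_{ij}, τ_{ij} ≥ 0 (for n = 2, say) and positive weights θ_1, θ_2 satisfying -d_i θ_i + Σ_j θ_j G_j |a*_{ij}| + Σ_j θ_j F_j |b*_{ij}| < 0 for i = 1, 2, such that for NO choice of positive weights ξ_i > 0 and exponents α_{ij}, β_{ij} ∈ (0,1) does the condition (-d_i)ξ_i + G_i[ξ_i|a*_{ii}| + (1/2)Σ_{j≠i} ξ_j |a*_{ji}|^{2α_{ji}}] + (1/2)ξ_i Σ_{j≠i} G_j |a*_{ij}|^{2(1-α_{ij})} + (1/2)F_i Σ_j ξ_j |b*_{ji}|^{2β_{ji}} + (1/2)ξ_i Σ_j F_j |b*_{ij}|^{2(1-β_{ij})} < 0 hold for all i. -/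

import Mathlib

open Finset in
/-- "the converse is not true": condition (3.3) can hold while
condition (3.1) (with α = 0) fails for every choice of weights and exponents. -/
theorem stmt9 :
    ∃ (d G F : Fin 2 → ℝ) (A B τ : Fin 2 → Fin 2 → ℝ) (θ : Fin 2 → ℝ),
      (∀ i, 0 < d i) ∧ (∀ j, 0 ≤ G j) ∧ (∀ j, 0 ≤ F j) ∧
      (∀ i j, 0 ≤ τ i j) ∧ (∀ i, 0 < θ i) ∧
      (∀ i, -d i * θ i + (∑ j, θ j * G j * |A i j|)
          + (∑ j, θ j * F j * |B i j|) < 0) ∧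
      ∀ (ξ : Fin 2 → ℝ) (αe βe : Fin 2 → Fin 2 → ℝ),
        (∀ i, 0 < ξ i) →
        (∀ i j, αe i j ∈ Set.Ioo (0 : ℝ) 1) →
        (∀ i j, βe i j ∈ Set.Ioo (0 : ℝ) 1) →
        ¬ (∀ i,
          (-d i) * ξ i
            + G i * (ξ i * |A i i|
                + (1 / 2) * ∑ j ∈ univ.erase i, ξ j * |A j i| ^ (2 * αe j i))
            + (1 / 2) * ξ i * ∑ j ∈ univ.erase i, G j * |A i j| ^ (2 * (1 - αe i j))
            + (1 / 2) * F i * ∑ j, ξ j * |B j i| ^ (2 * βe j i)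
            + (1 / 2) * ξ i * ∑ j, F j * |B i j| ^ (2 * (1 - βe i j)) < 0) := by
  refine ⟨fun _ => 1, ![0, 2], fun _ => 0, ![![0, 2], ![0, 0]], fun _ _ => 0,
    fun _ _ => 0, ![1, 1/10], fun i => one_pos, ?_, fun j => le_refl 0,
    fun i j => le_refl 0, ?_, ?_, ?_⟩
  · intro j; fin_cases j <;> norm_num
  · intro i; fin_cases i <;> norm_num
  · intro i; fin_cases i <;> simp [Fin.sum_univ_two] <;> norm_num
  · intro ξ αe βe hξ hα hβ h
    have h0 := h 0
    have herase : (univ.erase (0 : Fin 2)) = {1} := by decide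
    have hz : ∀ (e : ℝ), 0 < e → |(0:ℝ)| ^ e = 0 := by
      intro e he
      rw [abs_zero, Real.zero_rpow (ne_of_gt he)]
    have hα01 := hα 0 1
    have hβ00 := hβ 0 0
    have hβ01 := hβ 0 1
    have hβ10 := hβ 1 0
    simp only [herase, Finset.sum_singleton, Fin.sum_univ_two,
      Matrix.cons_val', Matrix.cons_val_zero, Matrix.cons_val_one,
      Matrix.head_cons, Matrix.head_fin_const, Matrix.cons_val_fin_one] at h0
    have hexp : (1:ℝ) < |(2:ℝ)| ^ (2 * (1 - αe 0 1)) := by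
      rw [abs_of_pos (by norm_num : (0:ℝ) < 2)]
      have : (0:ℝ) < 2 * (1 - αe 0 1) := by nlinarith [hα01.2]
      calc (1:ℝ) = (2:ℝ) ^ (0:ℝ) := by rw [Real.rpow_zero]
        _ < 2 ^ (2 * (1 - αe 0 1)) :=
          Real.rpow_lt_rpow_left_iff (by norm_num) |>.mpr this
    have hξ0 := hξ 0
    norm_num at h0 hexp
    nlinarith [h0, hexp, hξ0, mul_lt_mul_of_pos_left hexp hξ0]
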